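/- Let ‖·‖ₜ and ‖·‖ₜ' be two geodesics of diagonalizable ultrametric norms on a d-dimensional vector space V over a non-Archimedean field. Then the relative volume vol(‖·‖ₜ, ‖·‖ₜ') = log(det‖·‖ₜ' / det‖·‖ₜ) is an affine function of t ∈ [0,1]. -/
import Mathlib


/-- The relative volume `vol(‖·‖ₜ, ‖·‖ₜ') = log(det‖·‖ₜ'/det‖·‖ₜ)` of two geodesics of
diagonalizable ultrametric norms on a `d`-dimensional space is an affine function of
`t ∈ [0,1]`.  Here each geodesic is given by geometric interpolation of the weights
`w0, w1` (resp. `w0', w1'`) on a codiagonalizing basis, and the determinant norm of a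
diagonal norm is the product of its weights. -/
theorem stmt_4 {ι : Type*} [Fintype ι] [Nonempty ι]
    (w0 w1 w0' w1' : ι → ℝ)
    (hw0 : ∀ i, 0 < w0 i) (hw1 : ∀ i, 0 < w1 i)
    (hw0' : ∀ i, 0 < w0' i) (hw1' : ∀ i, 0 < w1' i) :
    ∃ α β : ℝ, ∀ t ∈ Set.Icc (0:ℝ) 1,
      Real.log (∏ i, (w0' i ^ (1 - t) * w1' i ^ t))
        - Real.log (∏ i, (w0 i ^ (1 - t) * w1 i ^ t)) = α + β * t := by
  refine ⟨(∑ i, Real.log (w0' i)) - ∑ i, Real.log (w0 i),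
    ((∑ i, Real.log (w1' i)) - ∑ i, Real.log (w1 i))
      - ((∑ i, Real.log (w0' i)) - ∑ i, Real.log (w0 i)), fun t _ => ?_⟩
  have key : ∀ (u v : ι → ℝ), (∀ i, 0 < u i) → (∀ i, 0 < v i) →
      Real.log (∏ i, (u i ^ (1 - t) * v i ^ t))
        = (1 - t) * ∑ i, Real.log (u i) + t * ∑ i, Real.log (v i) := by
    intro u v hu hv
    rw [Real.log_prod]
    · rw [Finset.mul_sum, Finset.mul_sum, ← Finset.sum_add_distrib]
      refine Finset.sum_congr rfl fun i _ => ?_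
      rw [Real.log_mul (Real.rpow_pos_of_pos (hu i) _).ne' (Real.rpow_pos_of_pos (hv i) _).ne',
        Real.log_rpow (hu i), Real.log_rpow (hv i)]
    · intro i _; exact (mul_pos (Real.rpow_pos_of_pos (hu i) _) (Real.rpow_pos_of_pos (hv i) _)).ne'
  rw [key w0' w1' hw0' hw1', key w0 w1 hw0 hw1]
  ring
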